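/- Let T be a finite lattice, X a chain in T with ⊥ ∈ X, B a chain with ⊥, ⊤ ∈ B, and φ : X → T a map satisfying φ(x) ≥ x for all x and φ(y) = φ(x) whenever x ≤ y ≤ φ(x) with x, y ∈ X. Then the following are equivalent: (1) for every x ∈ X, [x, φ(x)] ∩ B = {φ(x)}; (2) (⋃_{x ∈ X} [x, φ(x)]) ∩ B = φ(X). Moreover, condition (1) holds if and only if α_B(x) = φ(x) for all x ∈ X, where α_B(t) = min { b ∈ B | b ≥ t }. -/
import Mathlib


attribute [local instance] Classical.propDecidable

lemma chain_inf_mem {T : Type*} [Lattice T] [OrderTop T] (s : Finset T)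
    (hs : IsChain (· ≤ ·) (s : Set T)) (hne : s.Nonempty) : s.inf id ∈ s := by
  induction hne using Finset.Nonempty.cons_induction with
  | singleton a => simp
  | cons a s ha hne ih =>
    have hsub : IsChain (· ≤ ·) (s : Set T) := by
      refine hs.mono ?_
      intro x hx
      simp only [Finset.coe_cons, Set.mem_insert_iff]
      exact Or.inr hx
    have hmem := ih hsub
    rw [Finset.inf_cons, id]
    rcases hs.total (Finset.mem_coe.2 (Finset.mem_cons_self a s))
        (Finset.mem_coe.2 (Finset.mem_cons.2 (Or.inr hmem))) with h | h
    · rw [inf_eq_left.2 h]; exact Finset.mem_cons_self a s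
    · rw [inf_eq_right.2 h]; exact Finset.mem_cons.2 (Or.inr hmem)

/-- `alphaB B t = min { b ∈ B | b ≥ t }`. -/
noncomputable def alphaB {T : Type*} [Lattice T] [Fintype T] [BoundedOrder T]
    (B : Finset T) (t : T) : T :=
  (B.filter fun b => t ≤ b).inf id

lemma alphaB_mem {T : Type*} [Lattice T] [Fintype T] [BoundedOrder T]
    (B : Finset T) (hB : IsChain (· ≤ ·) (B : Set T)) (htop : ⊤ ∈ B) (t : T) :
    alphaB B t ∈ B ∧ t ≤ alphaB B t := by
  set s := B.filter fun b => t ≤ b with hsdef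
  have hsub : s ⊆ B := Finset.filter_subset _ _
  have hschain : IsChain (· ≤ ·) (s : Set T) := hB.mono (by exact_mod_cast hsub)
  have hne : s.Nonempty := ⟨⊤, Finset.mem_filter.2 ⟨htop, le_top⟩⟩
  have hmem : s.inf id ∈ s := chain_inf_mem s hschain hne
  refine ⟨hsub hmem, ?_⟩
  exact Finset.le_inf fun b hb => (Finset.mem_filter.1 hb).2

lemma alphaB_le {T : Type*} [Lattice T] [Fintype T] [BoundedOrder T]
    (B : Finset T) {t b : T} (hb : b ∈ B) (htb : t ≤ b) : alphaB B t ≤ b :=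
  Finset.inf_le (Finset.mem_filter.2 ⟨hb, htb⟩)

/-- Let `X` be a chain with `⊥ ∈ X` and `B` a chain with `⊥, ⊤ ∈ B` in a finite
lattice `T`, and let `φ` satisfy `φ x ≥ x` and `φ y = φ x` whenever `x ≤ y ≤ φ x`
(for `x, y ∈ X`). Then `[x, φ x] ∩ B = {φ x}` for all `x ∈ X` iff
`(⋃_{x ∈ X} [x, φ x]) ∩ B = φ(X)`, and the first condition holds iff
`α_B x = φ x` for all `x ∈ X`. -/
theorem interval_intersection_conditions
    {T : Type*} [Lattice T] [Fintype T] [BoundedOrder T]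
    (X : Finset T) (hX : IsChain (· ≤ ·) (X : Set T)) (hXbot : ⊥ ∈ X)
    (B : Finset T) (hB : IsChain (· ≤ ·) (B : Set T)) (hbot : ⊥ ∈ B) (htop : ⊤ ∈ B)
    (φ : T → T)
    (hge : ∀ x ∈ X, x ≤ φ x)
    (hc : ∀ x ∈ X, ∀ y ∈ X, x ≤ y → y ≤ φ x → φ y = φ x) :
    ((∀ x ∈ X, Set.Icc x (φ x) ∩ (B : Set T) = {φ x}) ↔
        (⋃ x ∈ X, Set.Icc x (φ x)) ∩ (B : Set T) = φ '' (X : Set T))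
      ∧ ((∀ x ∈ X, Set.Icc x (φ x) ∩ (B : Set T) = {φ x}) ↔
        ∀ x ∈ X, alphaB B x = φ x) := by
  constructor
  · constructor
    · intro h1
      ext b
      constructor
      · rintro ⟨hbU, hbB⟩
        simp only [Set.mem_iUnion] at hbU
        obtain ⟨x, hx, hbI⟩ := hbU
        have : b ∈ Set.Icc x (φ x) ∩ (B : Set T) := ⟨hbI, hbB⟩
        rw [h1 x hx] at this
        exact ⟨x, hx, this.symm⟩
      · rintro ⟨x, hx, rfl⟩
        have : φ x ∈ Set.Icc x (φ x) ∩ (B : Set T) := by rw [h1 x hx]; rfl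
        exact ⟨Set.mem_iUnion.2 ⟨x, Set.mem_iUnion.2 ⟨hx, this.1⟩⟩, this.2⟩
    · intro h2 x hx
      have hφB : φ x ∈ (B : Set T) := by
        have : φ x ∈ (⋃ x ∈ X, Set.Icc x (φ x)) ∩ (B : Set T) := by
          rw [h2]; exact ⟨x, hx, rfl⟩
        exact this.2
      ext b
      constructor
      · rintro ⟨hbI, hbB⟩
        have : b ∈ φ '' (X : Set T) := by
          rw [← h2]
          exact ⟨Set.mem_iUnion.2 ⟨x, Set.mem_iUnion.2 ⟨hx, hbI⟩⟩, hbB⟩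
        obtain ⟨y, hy, rfl⟩ := this
        rcases hX.total (Finset.mem_coe.2 hx) (Finset.mem_coe.2 hy) with hxy | hyx
        · exact (hc x hx y hy hxy ((hge y hy).trans hbI.2)).symm ▸ rfl
        · exact (hc y hy x hx hyx hbI.1).symm ▸ rfl
      · rintro rfl
        exact ⟨⟨hge x hx, le_refl _⟩, hφB⟩
  · constructor
    · intro h1 x hx
      obtain ⟨haB, hxa⟩ := alphaB_mem B hB htop x
      have hφB : φ x ∈ Set.Icc x (φ x) ∩ (B : Set T) := by rw [h1 x hx]; rfl
      have hle : alphaB B x ≤ φ x := alphaB_le B (Finset.mem_coe.1 hφB.2) (hge x hx)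
      have : alphaB B x ∈ Set.Icc x (φ x) ∩ (B : Set T) := ⟨⟨hxa, hle⟩, haB⟩
      rw [h1 x hx] at this
      exact this
    · intro ha x hx
      obtain ⟨haB, hxa⟩ := alphaB_mem B hB htop x
      ext b
      constructor
      · rintro ⟨hbI, hbB⟩
        have := alphaB_le B (Finset.mem_coe.1 hbB) hbI.1
        rw [ha x hx] at this
        exact le_antisymm hbI.2 this
      · rintro rfl
        rw [← ha x hx]
        exact ⟨⟨hxa, le_refl _⟩, (ha x hx) ▸ haB⟩
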